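/- Let G be the 3-SAT reinforcement construction (triangles {u_i, ū_i, v_i}, clause vertices c_j adjacent to their three literals, and a vertex s joined to all c_j), where no clause contains both a variable and its negation. If e is a non-edge of G with γ(G + e) = n, then every minimum dominating set D_e of G + e satisfies |D_e ∩ {u_i, ū_i, v_i}| = 1 for every i = 1,…,n and c_j ∉ D_e for every j = 1,…,m. -/

import Mathlib

/-- A literal over `n` variables: a variable index together with a polarity
(`true` = the positive literal `uᵢ`, `false` = the negated literal `ūᵢ`). -/
abbrev Lit (n : ℕ) := Fin n × Bool

/-- Vertex type of the reinforcement construction: literal vertices `uᵢ, ūᵢ`,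
triangle apexes `vᵢ`, clause vertices `cⱼ`, and the single vertex `s`. -/
abbrev RVert (n m : ℕ) := Lit n ⊕ (Fin n ⊕ (Fin m ⊕ Unit))

/-- The literal vertex `uᵢ` (if `b = true`) or `ūᵢ` (if `b = false`). -/
def rlit {n m : ℕ} (i : Fin n) (b : Bool) : RVert n m := Sum.inl (i, b)

/-- The triangle apex vertex `vᵢ`. -/
def rvv {n m : ℕ} (i : Fin n) : RVert n m := Sum.inr (Sum.inl i)

/-- The clause vertex `cⱼ`. -/
def rcv {n m : ℕ} (j : Fin m) : RVert n m := Sum.inr (Sum.inr (Sum.inl j))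

/-- The vertex `s`. -/
def rsv {n m : ℕ} : RVert n m := Sum.inr (Sum.inr (Sum.inr ()))

/-- Base adjacency relation of the reinforcement construction (symmetrized by
`fromRel`): triangle edges on `{uᵢ, ūᵢ, vᵢ}`, clause edges joining `cⱼ` to its
three literals, and the edges joining `s` to every `cⱼ`. -/
def reinfRel {n m : ℕ} (C : Fin m → Fin 3 → Lit n) : RVert n m → RVert n m → Prop
  | Sum.inl (i, b), Sum.inl (i', b') => i = i' ∧ b ≠ b'
  | Sum.inl (i, _), Sum.inr (Sum.inl i') => i = i'
  | Sum.inl l, Sum.inr (Sum.inr (Sum.inl j)) => ∃ k, C j k = l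
  | Sum.inr (Sum.inr (Sum.inl _)), Sum.inr (Sum.inr (Sum.inr _)) => True
  | _, _ => False

/-- The graph of the reinforcement construction associated with a 3-SAT instance `C`. -/
def reinfGraph {n m : ℕ} (C : Fin m → Fin 3 → Lit n) : SimpleGraph (RVert n m) :=
  SimpleGraph.fromRel (reinfRel C)

/-- `D` is a dominating set of `G`: every vertex not in `D` has a neighbor in `D`. -/
def IsDomSet {V : Type*} (G : SimpleGraph V) (D : Finset V) : Prop :=
  ∀ v, v ∉ D → ∃ u ∈ D, G.Adj u v

/-- The domination number of `G`: the minimum cardinality of a dominating set. -/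
noncomputable def domNum {V : Type*} (G : SimpleGraph V) : ℕ :=
  sInf {k | ∃ D : Finset V, IsDomSet G D ∧ D.card = k}

lemma adj_rvv {n m : ℕ} {C : Fin m → Fin 3 → Lit n} {a : RVert n m} {i : Fin n}
    (h : (reinfGraph C).Adj a (rvv i)) : a = rlit i true ∨ a = rlit i false := by
  rw [reinfGraph, SimpleGraph.fromRel_adj] at h
  obtain ⟨hne, h | h⟩ := h <;>
  rcases a with ⟨i', b'⟩ | i' | j' | _ <;>
  simp_all [reinfRel, rlit, rvv] <;>
  rcases b' with _ | _ <;> simp_all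

lemma adj_rlit {n m : ℕ} {C : Fin m → Fin 3 → Lit n} {a : RVert n m} {i : Fin n} {b : Bool}
    (h : (reinfGraph C).Adj a (rlit i b)) :
    a = rlit i (!b) ∨ a = rvv i ∨ ∃ j k, a = rcv j ∧ C j k = (i, b) := by
  rw [reinfGraph, SimpleGraph.fromRel_adj] at h
  obtain ⟨hne, h | h⟩ := h <;>
  rcases a with ⟨i', b'⟩ | i' | j' | _ <;>
  simp_all [reinfRel, rlit, rvv, rcv] <;>
  rcases b' with _ | _ <;> rcases b with _ | _ <;> simp_all

/-- index of the triangle a vertex belongs to, if any -/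
def ridx {n m : ℕ} : RVert n m → Option (Fin n)
  | Sum.inl (i, _) => some i
  | Sum.inr (Sum.inl i) => some i
  | _ => none

lemma ridx_fiber {n m : ℕ} (D : Finset (RVert n m)) (i : Fin n) [DecidableEq (RVert n m)] :
    D.filter (fun x => ridx x = some i) = D ∩ {rlit i true, rlit i false, rvv i} := by
  ext x
  rw [Finset.mem_filter]
  rcases x with ⟨i', b'⟩ | i' | j' | _ <;>
      simp [ridx, rlit, rvv, rcv, Finset.mem_filter, Prod.ext_iff] <;>
    rcases b' with _ | _ <;> tauto

/-- In the reinforcement construction (for a 3-SAT instance in which no clause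
contains both a variable and its negation), if `e = uv` is a non-edge with
`γ(G + e) = n`, then every minimum dominating set `D` of `G + e` satisfies
`|D ∩ {uᵢ, ūᵢ, vᵢ}| = 1` for every `i`, and `cⱼ ∉ D` for every `j`. -/
theorem reinfGraph_addEdge_gammaSet_structure {n m : ℕ} (C : Fin m → Fin 3 → Lit n)
    (hC : ∀ j k k', (C j k).1 = (C j k').1 → (C j k).2 = (C j k').2)
    (u v : RVert n m) (huv : u ≠ v) (hadj : ¬ (reinfGraph C).Adj u v)
    (h : domNum (reinfGraph C ⊔ SimpleGraph.fromEdgeSet {s(u, v)}) = n)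
    (D : Finset (RVert n m))
    (hD : IsDomSet (reinfGraph C ⊔ SimpleGraph.fromEdgeSet {s(u, v)}) D)
    (hcard : D.card = domNum (reinfGraph C ⊔ SimpleGraph.fromEdgeSet {s(u, v)})) :
    (∀ i : Fin n, (D ∩ {rlit i true, rlit i false, rvv i}).card = 1) ∧
      (∀ j : Fin m, rcv j ∉ D) := by
  classical
  have hDn : D.card = n := hcard.trans h
  -- adjacency characterization of the augmented graph
  have hadj' : ∀ a b : RVert n m,
      (reinfGraph C ⊔ SimpleGraph.fromEdgeSet {s(u, v)}).Adj a b ↔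
        (reinfGraph C).Adj a b ∨ (a = u ∧ b = v) ∨ (a = v ∧ b = u) := by
    intro a b
    simp only [SimpleGraph.sup_adj, SimpleGraph.fromEdgeSet_adj, Set.mem_singleton_iff,
      Sym2.eq, Sym2.rel_iff', Prod.mk.injEq, Prod.swap_prod_mk]
    constructor
    · rintro (hg | ⟨⟨h1, h2⟩ | ⟨h1, h2⟩, hne⟩) <;> tauto
    · rintro (hg | ⟨h1, h2⟩ | ⟨h1, h2⟩)
      · exact Or.inl hg
      · subst h1; subst h2; exact Or.inr ⟨Or.inl ⟨rfl, rfl⟩, huv⟩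
      · subst h1; subst h2; exact Or.inr ⟨Or.inr ⟨rfl, rfl⟩, huv.symm⟩
  -- fiberwise decomposition of the cardinality of D
  have hfib : D.card = (D.filter (fun x => ridx x = none)).card
      + ∑ i : Fin n, (D.filter (fun x => ridx x = some i)).card := by
    rw [Finset.card_eq_sum_card_fiberwise (f := ridx) (t := Finset.univ)
      (fun x _ => Finset.mem_univ _)]
    rw [Fintype.sum_option]
  -- Key: every triangle fiber is nonempty
  have key : ∀ i : Fin n, 1 ≤ (D.filter (fun x => ridx x = some i)).card := by
    by_contra hcon
    push_neg at hcon
    obtain ⟨i₀, hi₀⟩ := hcon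
    rw [Nat.lt_one_iff, Finset.card_eq_zero, Finset.filter_eq_empty_iff] at hi₀
    have hnotD : ∀ x : RVert n m, ridx x = some i₀ → x ∉ D := fun x hx hxD => hi₀ hxD hx
    -- dominate v_{i₀}
    obtain ⟨a, haD, haAdj⟩ := hD (rvv i₀) (hnotD _ rfl)
    rw [hadj'] at haAdj
    have hE : (a = u ∧ rvv i₀ = v) ∨ (a = v ∧ rvv i₀ = u) := by
      rcases haAdj with hg | hE
      · rcases adj_rvv hg with rfl | rfl
        · exact absurd haD (hnotD _ rfl)
        · exact absurd haD (hnotD _ rfl)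
      · exact hE
    -- dominate the literal vertices: each needs a clause vertex of matching polarity
    have lit_dom : ∀ b : Bool, ∃ j : Fin m, rcv j ∈ D ∧ ∃ k, C j k = (i₀, b) := by
      intro b
      obtain ⟨a₁, ha₁D, ha₁⟩ := hD (rlit i₀ b) (hnotD _ rfl)
      rw [hadj'] at ha₁
      rcases ha₁ with hg | hE₁
      · rcases adj_rlit hg with rfl | rfl | ⟨j, k, rfl, hk⟩
        · exact absurd ha₁D (hnotD _ rfl)
        · exact absurd ha₁D (hnotD _ rfl)
        · exact ⟨j, ha₁D, k, hk⟩
      · exfalso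
        rcases hE with ⟨rfl, hv⟩ | ⟨rfl, hv⟩ <;> rcases hE₁ with ⟨h1, h2⟩ | ⟨h1, h2⟩
        · exact absurd (h2.trans hv.symm) (by simp [rlit, rvv])
        · exact hnotD _ (by rw [h1, ← hv]; rfl) ha₁D
        · exact hnotD _ (by rw [h1, ← hv]; rfl) ha₁D
        · exact absurd (h2.trans hv.symm) (by simp [rlit, rvv])
    obtain ⟨j₁, hj₁D, k₁, hk₁⟩ := lit_dom true
    obtain ⟨j₂, hj₂D, k₂, hk₂⟩ := lit_dom false
    have hj12 : j₁ ≠ j₂ := by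
      rintro rfl
      have := hC j₁ k₁ k₂ (by rw [hk₁, hk₂])
      rw [hk₁, hk₂] at this
      exact Bool.noConfusion this
    -- every other triangle fiber is nonempty
    have hfib1 : ∀ i : Fin n, i ≠ i₀ → 1 ≤ (D.filter (fun x => ridx x = some i)).card := by
      intro i hi
      rw [Nat.one_le_iff_ne_zero, ← Nat.pos_iff_ne_zero, Finset.card_pos]
      by_cases hv : rvv i ∈ D
      · exact ⟨rvv i, Finset.mem_filter.2 ⟨hv, rfl⟩⟩
      obtain ⟨a₂, ha₂D, ha₂⟩ := hD (rvv i) hv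
      rw [hadj'] at ha₂
      rcases ha₂ with hg | hE₂
      · rcases adj_rvv hg with rfl | rfl <;>
        exact ⟨_, Finset.mem_filter.2 ⟨ha₂D, rfl⟩⟩
      · exfalso
        rcases hE with ⟨rfl, hw⟩ | ⟨rfl, hw⟩ <;> rcases hE₂ with ⟨h1, h2⟩ | ⟨h1, h2⟩
        · exact hi (by have := h2.trans hw.symm; simpa [rvv] using this)
        · exact hnotD _ (by rw [h1, ← hw]; rfl) ha₂D
        · exact hnotD _ (by rw [h1, ← hw]; rfl) ha₂D
        · exact hi (by have := h2.trans hw.symm; simpa [rvv] using this)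
    -- counting contradiction
    have hcl : 2 ≤ (D.filter (fun x => ridx x = none)).card := by
      have hsub : ({rcv j₁, rcv j₂} : Finset (RVert n m)) ⊆
          D.filter (fun x => ridx x = none) := by
        intro x hx
        rcases Finset.mem_insert.1 hx with rfl | hx
        · exact Finset.mem_filter.2 ⟨hj₁D, rfl⟩
        · rw [Finset.mem_singleton] at hx
          subst hx
          exact Finset.mem_filter.2 ⟨hj₂D, rfl⟩
      have : ({rcv j₁, rcv j₂} : Finset (RVert n m)).card = 2 :=
        Finset.card_pair (by simpa [rcv] using hj12)
      calc 2 = ({rcv j₁, rcv j₂} : Finset (RVert n m)).card := this.symm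
        _ ≤ _ := Finset.card_le_card hsub
    have hsum : (Finset.univ.erase i₀).card
        ≤ ∑ i : Fin n, (D.filter (fun x => ridx x = some i)).card := by
      calc (Finset.univ.erase i₀).card
          = ∑ _i ∈ Finset.univ.erase i₀, 1 := by simp
        _ ≤ ∑ i ∈ Finset.univ.erase i₀, (D.filter (fun x => ridx x = some i)).card :=
            Finset.sum_le_sum (fun i hi => hfib1 i (Finset.ne_of_mem_erase hi))
        _ ≤ ∑ i : Fin n, (D.filter (fun x => ridx x = some i)).card :=
            Finset.sum_le_sum_of_subset (Finset.erase_subset _ _)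
    have hcardE : (Finset.univ.erase i₀).card = n - 1 := by
      simp [Finset.card_erase_of_mem]
    have hn1 : 1 ≤ n := i₀.pos
    omega
  -- from the key fact, each fiber has exactly one element and the none-fiber is empty
  have hsum2 : n ≤ ∑ i : Fin n, (D.filter (fun x => ridx x = some i)).card := by
    calc n = ∑ _i : Fin n, 1 := by simp
      _ ≤ _ := Finset.sum_le_sum (fun i _ => key i)
  have h0 : (D.filter (fun x => ridx x = none)).card = 0 := by omega
  have hSn : (∑ i : Fin n, (D.filter (fun x => ridx x = some i)).card) = n := by omega
  have hone : ∀ i : Fin n, (D.filter (fun x => ridx x = some i)).card = 1 := by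
    intro i
    have hsplit : (D.filter (fun x => ridx x = some i)).card
        + ∑ j ∈ Finset.univ.erase i, (D.filter (fun x => ridx x = some j)).card
        = ∑ j : Fin n, (D.filter (fun x => ridx x = some j)).card :=
      Finset.add_sum_erase _ (fun j => (D.filter (fun x => ridx x = some j)).card)
        (Finset.mem_univ i)
    have hrest : (Finset.univ.erase i).card
        ≤ ∑ j ∈ Finset.univ.erase i, (D.filter (fun x => ridx x = some j)).card := by
      calc (Finset.univ.erase i).card = ∑ _j ∈ Finset.univ.erase i, 1 := by simp
        _ ≤ _ := Finset.sum_le_sum (fun j _ => key j)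
    have hcardE : (Finset.univ.erase i).card = n - 1 := by
      simp [Finset.card_erase_of_mem]
    have hk := key i
    have hn1 : 1 ≤ n := i.pos
    omega
  constructor
  · intro i
    rw [← ridx_fiber D i]
    exact hone i
  · intro j hj
    have : rcv j ∈ D.filter (fun x => ridx x = none) := Finset.mem_filter.2 ⟨hj, rfl⟩
    rw [Finset.card_eq_zero] at h0
    rw [h0] at this
    exact absurd this (Finset.notMem_empty _)
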